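/- Let $G$ be a finite simple graph with $n \geq 1$ vertices and $e$ edges. Then $G$ contains an independent set of size at least $\frac{n}{2e/n + 1} = \frac{n^2}{2e + n}$. -/

import Mathlib

open Finset

/-- Greedy/Caro–Wei lemma, localized to a finset `s`: there is an independent set
`t ⊆ s` with `∑_{v ∈ s} 1/(d_s(v)+1) ≤ |t|`, where `d_s(v)` counts neighbors in `s`. -/
lemma caro_wei_aux {V : Type*} [Fintype V] [DecidableEq V] (G : SimpleGraph V)
    [DecidableRel G.Adj] : ∀ (s : Finset V), ∃ t ⊆ s,
      (∀ v ∈ t, ∀ w ∈ t, ¬ G.Adj v w) ∧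
      ∑ v ∈ s, (1 : ℝ) / ((s.filter (G.Adj v)).card + 1) ≤ t.card := by
  intro s
  induction s using Finset.strongInduction with
  | _ s ih =>
  rcases s.eq_empty_or_nonempty with rfl | hs
  · exact ⟨∅, by simp⟩
  obtain ⟨v, hv, hvmin⟩ := s.exists_min_image (fun u => ((s.filter (G.Adj u)).card : ℕ)) hs
  set N : Finset V := insert v (s.filter (G.Adj v)) with hN
  have hvnotfil : v ∉ s.filter (G.Adj v) := by simp [G.irrefl]
  have hNcard : N.card = (s.filter (G.Adj v)).card + 1 := by
    rw [hN, Finset.card_insert_of_notMem hvnotfil]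
  have hNsub : N ⊆ s := by
    intro u hu
    rcases Finset.mem_insert.1 hu with rfl | hu
    · exact hv
    · exact (Finset.mem_filter.1 hu).1
  set s' : Finset V := s \ N with hs'
  have hs'sub : s' ⊂ s := Finset.sdiff_ssubset hNsub ⟨v, Finset.mem_insert_self _ _⟩
  obtain ⟨t', ht'sub, ht'ind, ht'sum⟩ := ih s' hs'sub
  have hvnt' : v ∉ t' := fun h => by
    have := ht'sub h
    rw [hs'] at this
    exact (Finset.mem_sdiff.1 this).2 (Finset.mem_insert_self _ _)
  refine ⟨insert v t', ?_, ?_, ?_⟩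
  · intro u hu
    rcases Finset.mem_insert.1 hu with rfl | hu
    · exact hv
    · exact (Finset.mem_sdiff.1 (ht'sub hu)).1
  · -- independence
    have hnadj : ∀ w ∈ t', ¬ G.Adj v w := by
      intro w hw hadj
      have hws' := ht'sub hw
      rw [hs'] at hws'
      have hwN : w ∈ N := Finset.mem_insert_of_mem
        (Finset.mem_filter.2 ⟨(Finset.mem_sdiff.1 hws').1, hadj⟩)
      exact (Finset.mem_sdiff.1 hws').2 hwN
    intro a ha b hb hab
    rcases Finset.mem_insert.1 ha with h1 | h1 <;> rcases Finset.mem_insert.1 hb with h2 | h2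
    · exact G.irrefl (h1 ▸ h2 ▸ hab)
    · exact hnadj b h2 (h1 ▸ hab)
    · exact hnadj a h1 (G.adj_symm (h2 ▸ hab))
    · exact ht'ind a h1 b h2 hab
  · -- the sum bound
    have hsplit : ∑ u ∈ s, (1 : ℝ) / ((s.filter (G.Adj u)).card + 1)
        = ∑ u ∈ s', (1 : ℝ) / ((s.filter (G.Adj u)).card + 1)
          + ∑ u ∈ N, (1 : ℝ) / ((s.filter (G.Adj u)).card + 1) := by
      rw [hs', Finset.sum_sdiff hNsub]
    have h1 : ∑ u ∈ N, (1 : ℝ) / ((s.filter (G.Adj u)).card + 1) ≤ 1 := by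
      have hbound : ∀ u ∈ N, (1 : ℝ) / ((s.filter (G.Adj u)).card + 1)
          ≤ 1 / ((s.filter (G.Adj v)).card + 1) := by
        intro u hu
        apply one_div_le_one_div_of_le
        · positivity
        · have := hvmin u (hNsub hu)
          exact_mod_cast add_le_add_left (Nat.cast_le.2 this) 1
      calc ∑ u ∈ N, (1 : ℝ) / ((s.filter (G.Adj u)).card + 1)
          ≤ ∑ _u ∈ N, (1 : ℝ) / ((s.filter (G.Adj v)).card + 1) :=
            Finset.sum_le_sum hbound
        _ = N.card * (1 / ((s.filter (G.Adj v)).card + 1)) := by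
            rw [Finset.sum_const, nsmul_eq_mul]
        _ = 1 := by
            rw [hNcard]
            push_cast
            field_simp
    have h2 : ∑ u ∈ s', (1 : ℝ) / ((s.filter (G.Adj u)).card + 1)
        ≤ ∑ u ∈ s', (1 : ℝ) / ((s'.filter (G.Adj u)).card + 1) := by
      apply Finset.sum_le_sum
      intro u _
      apply one_div_le_one_div_of_le
      · positivity
      · have hmono : (s'.filter (G.Adj u)).card ≤ (s.filter (G.Adj u)).card :=
          Finset.card_le_card (Finset.filter_subset_filter _ (Finset.sdiff_subset))
        exact_mod_cast add_le_add_left (Nat.cast_le.2 hmono) 1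
    have hcard : ((insert v t').card : ℝ) = t'.card + 1 := by
      rw [Finset.card_insert_of_notMem hvnt']; push_cast; ring
    rw [hsplit, hcard]
    have := h2.trans ht'sum
    linarith

/-- Turán's theorem (independence number form): a finite simple graph with `n ≥ 1`
vertices and `e` edges has an independent set of size at least `n²/(2e+n)`. -/
theorem stmt6 {V : Type*} [Fintype V] [DecidableEq V] (G : SimpleGraph V)
    [DecidableRel G.Adj] (hn : 1 ≤ Fintype.card V) :
    ∃ s : Finset V, (∀ v ∈ s, ∀ w ∈ s, ¬ G.Adj v w) ∧
      (Fintype.card V : ℝ) ^ 2 / (2 * G.edgeFinset.card + Fintype.card V) ≤ s.card := by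
  obtain ⟨t, -, htind, htsum⟩ := caro_wei_aux G Finset.univ
  refine ⟨t, htind, ?_⟩
  have hdeg : ∀ v : V, (Finset.univ.filter (G.Adj v)).card = G.degree v := by
    intro v
    rw [SimpleGraph.degree]
    congr 1
    ext u
    simp [SimpleGraph.mem_neighborFinset]
  -- Cauchy–Schwarz: n² ≤ (∑ 1/(d+1)) * (∑ (d+1))
  have hCS : ((Fintype.card V : ℝ)) ^ 2 ≤
      (∑ v : V, (1 : ℝ) / (G.degree v + 1)) * (∑ v : V, ((G.degree v : ℝ) + 1)) := by
    have := Finset.sum_sq_le_sum_mul_sum_of_sq_eq_mul (R := ℝ) Finset.univ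
      (r := fun _ : V => (1 : ℝ)) (f := fun v => (1 : ℝ) / (G.degree v + 1))
      (g := fun v => (G.degree v : ℝ) + 1)
      (fun i _ => by positivity) (fun i _ => by positivity)
      (fun i _ => by field_simp)
    simpa [Finset.card_univ] using this
  have hsumdeg : (∑ v : V, ((G.degree v : ℝ) + 1)) =
      2 * G.edgeFinset.card + Fintype.card V := by
    rw [Finset.sum_add_distrib, Finset.sum_const, Finset.card_univ, nsmul_eq_mul, mul_one]
    congr 1
    rw [← Nat.cast_sum, G.sum_degrees_eq_twice_card_edges]
    push_cast; ring
  have hpos : (0 : ℝ) < 2 * G.edgeFinset.card + Fintype.card V := by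
    have : (1 : ℝ) ≤ Fintype.card V := by exact_mod_cast hn
    positivity
  rw [div_le_iff₀ hpos]
  calc (Fintype.card V : ℝ) ^ 2
      ≤ (∑ v : V, (1 : ℝ) / (G.degree v + 1)) * (2 * G.edgeFinset.card + Fintype.card V) := by
        rw [← hsumdeg]; exact hCS
    _ ≤ t.card * (2 * G.edgeFinset.card + Fintype.card V) := by
        apply mul_le_mul_of_nonneg_right _ hpos.le
        calc ∑ v : V, (1 : ℝ) / (G.degree v + 1)
            = ∑ v ∈ Finset.univ, (1 : ℝ) / ((Finset.univ.filter (G.Adj v)).card + 1) := by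
              apply Finset.sum_congr rfl
              intro v _
              rw [hdeg v]
          _ ≤ t.card := htsum
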